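/- arXiv:2405.14760 — 2 statements merged into one kernel-verified Lean document; each statement's English description precedes it below -/
import Mathlib

section
/- Let V ⊆ 𝔻 be open and φ : V → ℝ twice differentiable, and set ψ ≔ φ/φ₀ (well defined since φ₀ < 0 on 𝔻). Then φ satisfies Δφ + 8·φ/(1 + x² + y²)² = 0 on V if and only if ψ satisfies Δψ + (2/φ₀)·(φ₀ₓ·ψ_x + φ₀_y·ψ_y) = 0 on V, where φ₀ₓ, φ₀_y denote the partial derivatives of φ₀. -/
open scoped Topology

/-- Partial derivative in `x` of a function of two real variables. -/
noncomputable def pdx (f : ℝ × ℝ → ℝ) (p : ℝ × ℝ) : ℝ := fderiv ℝ f p (1, 0)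

/-- Partial derivative in `y` of a function of two real variables. -/
noncomputable def pdy (f : ℝ × ℝ → ℝ) (p : ℝ × ℝ) : ℝ := fderiv ℝ f p (0, 1)

/-- Laplacian of a function of two real variables. -/
noncomputable def lap (f : ℝ × ℝ → ℝ) (p : ℝ × ℝ) : ℝ := pdx (pdx f) p + pdy (pdy f) p

/-- The special solution `φ₀(x,y) = −(1 − x² − y²)/(1 + x² + y²)`. -/
noncomputable def phi0 : ℝ × ℝ → ℝ := fun p =>
  -(1 - p.1 ^ 2 - p.2 ^ 2) / (1 + p.1 ^ 2 + p.2 ^ 2)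

section helpers
variable {f g : ℝ × ℝ → ℝ} {p : ℝ × ℝ}

lemma pdx_sub (hf : DifferentiableAt ℝ f p) (hg : DifferentiableAt ℝ g p) :
    pdx (fun q => f q - g q) p = pdx f p - pdx g p := by
  unfold pdx; rw [fderiv_fun_sub hf hg]; simp

lemma pdx_neg : pdx (fun q => -(f q)) p = -(pdx f p) := by
  unfold pdx; rw [fderiv_fun_neg]; simp

lemma pdx_const (c : ℝ) : pdx (fun _ => c) p = 0 := by
  unfold pdx; rw [fderiv_fun_const]; simp

lemma pdx_mul (hf : DifferentiableAt ℝ f p) (hg : DifferentiableAt ℝ g p) :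
    pdx (fun q => f q * g q) p = pdx f p * g p + f p * pdx g p := by
  unfold pdx; rw [fderiv_fun_mul hf hg]; simp; ring

lemma pdx_pow (hf : DifferentiableAt ℝ f p) (n : ℕ) :
    pdx (fun q => f q ^ n) p = n * f p ^ (n - 1) * pdx f p := by
  have h : HasFDerivAt (fun q => f q ^ n) (((n : ℝ) * f p ^ (n - 1)) • fderiv ℝ f p) p :=
    (hasDerivAt_pow n (f p)).comp_hasFDerivAt p hf.hasFDerivAt
  unfold pdx; rw [h.fderiv]; simp [mul_assoc]

lemma pdx_div (hf : DifferentiableAt ℝ f p) (hg : DifferentiableAt ℝ g p) (h0 : g p ≠ 0) :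
    pdx (fun q => f q / g q) p = (pdx f p * g p - f p * pdx g p) / g p ^ 2 := by
  have hinv : HasFDerivAt (fun q => (g q)⁻¹) ((-(g p ^ 2)⁻¹) • fderiv ℝ g p) p :=
    (hasDerivAt_inv h0).comp_hasFDerivAt p hg.hasFDerivAt
  have h : HasFDerivAt (fun q => f q / g q)
      (f p • ((-(g p ^ 2)⁻¹) • fderiv ℝ g p) + (g p)⁻¹ • fderiv ℝ f p) p := by
    simp only [div_eq_mul_inv]
    exact hf.hasFDerivAt.mul hinv
  unfold pdx; rw [h.fderiv]; simp
  field_simp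
  ring

lemma diffAt_div (hf : DifferentiableAt ℝ f p) (hg : DifferentiableAt ℝ g p) (h0 : g p ≠ 0) :
    DifferentiableAt ℝ (fun q => f q / g q) p := by
  simp only [div_eq_mul_inv]; exact hf.mul (hg.inv h0)

lemma pdx_fst : pdx (fun q : ℝ × ℝ => q.1) p = 1 := by
  have h : HasFDerivAt (fun q : ℝ × ℝ => q.1) (ContinuousLinearMap.fst ℝ ℝ ℝ) p :=
    hasFDerivAt_fst
  unfold pdx; rw [h.fderiv]; simp

lemma pdx_snd : pdx (fun q : ℝ × ℝ => q.2) p = 0 := by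
  have h : HasFDerivAt (fun q : ℝ × ℝ => q.2) (ContinuousLinearMap.snd ℝ ℝ ℝ) p :=
    hasFDerivAt_snd
  unfold pdx; rw [h.fderiv]; simp

lemma pdy_sub (hf : DifferentiableAt ℝ f p) (hg : DifferentiableAt ℝ g p) :
    pdy (fun q => f q - g q) p = pdy f p - pdy g p := by
  unfold pdy; rw [fderiv_fun_sub hf hg]; simp

lemma pdy_neg : pdy (fun q => -(f q)) p = -(pdy f p) := by
  unfold pdy; rw [fderiv_fun_neg]; simp

lemma pdy_const (c : ℝ) : pdy (fun _ => c) p = 0 := by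
  unfold pdy; rw [fderiv_fun_const]; simp

lemma pdy_mul (hf : DifferentiableAt ℝ f p) (hg : DifferentiableAt ℝ g p) :
    pdy (fun q => f q * g q) p = pdy f p * g p + f p * pdy g p := by
  unfold pdy; rw [fderiv_fun_mul hf hg]; simp; ring

lemma pdy_pow (hf : DifferentiableAt ℝ f p) (n : ℕ) :
    pdy (fun q => f q ^ n) p = n * f p ^ (n - 1) * pdy f p := by
  have h : HasFDerivAt (fun q => f q ^ n) (((n : ℝ) * f p ^ (n - 1)) • fderiv ℝ f p) p :=
    (hasDerivAt_pow n (f p)).comp_hasFDerivAt p hf.hasFDerivAt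
  unfold pdy; rw [h.fderiv]; simp [mul_assoc]

lemma pdy_div (hf : DifferentiableAt ℝ f p) (hg : DifferentiableAt ℝ g p) (h0 : g p ≠ 0) :
    pdy (fun q => f q / g q) p = (pdy f p * g p - f p * pdy g p) / g p ^ 2 := by
  have hinv : HasFDerivAt (fun q => (g q)⁻¹) ((-(g p ^ 2)⁻¹) • fderiv ℝ g p) p :=
    (hasDerivAt_inv h0).comp_hasFDerivAt p hg.hasFDerivAt
  have h : HasFDerivAt (fun q => f q / g q)
      (f p • ((-(g p ^ 2)⁻¹) • fderiv ℝ g p) + (g p)⁻¹ • fderiv ℝ f p) p := by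
    simp only [div_eq_mul_inv]
    exact hf.hasFDerivAt.mul hinv
  unfold pdy; rw [h.fderiv]; simp
  field_simp
  ring

lemma pdy_fst : pdy (fun q : ℝ × ℝ => q.1) p = 0 := by
  have h : HasFDerivAt (fun q : ℝ × ℝ => q.1) (ContinuousLinearMap.fst ℝ ℝ ℝ) p :=
    hasFDerivAt_fst
  unfold pdy; rw [h.fderiv]; simp

lemma pdy_snd : pdy (fun q : ℝ × ℝ => q.2) p = 1 := by
  have h : HasFDerivAt (fun q : ℝ × ℝ => q.2) (ContinuousLinearMap.snd ℝ ℝ ℝ) p :=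
    hasFDerivAt_snd
  unfold pdy; rw [h.fderiv]; simp

lemma pdx_sq (hg : DifferentiableAt ℝ g p) :
    pdx (fun q => g q ^ 2) p = 2 * g p * pdx g p := by
  rw [pdx_pow hg 2]; norm_num

lemma pdy_sq (hg : DifferentiableAt ℝ g p) :
    pdy (fun q => g q ^ 2) p = 2 * g p * pdy g p := by
  rw [pdy_pow hg 2]; norm_num

lemma den_ne : (1 + p.1 ^ 2 + p.2 ^ 2 : ℝ) ≠ 0 := by positivity

/-- The `x`-partial of `phi0`. -/
noncomputable def phi0x : ℝ × ℝ → ℝ := fun q => 4 * q.1 / (1 + q.1 ^ 2 + q.2 ^ 2) ^ 2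
/-- The `y`-partial of `phi0`. -/
noncomputable def phi0y : ℝ × ℝ → ℝ := fun q => 4 * q.2 / (1 + q.1 ^ 2 + q.2 ^ 2) ^ 2

lemma diff_num : DifferentiableAt ℝ (fun q : ℝ × ℝ => -(1 - q.1 ^ 2 - q.2 ^ 2)) p := by fun_prop
lemma diff_den : DifferentiableAt ℝ (fun q : ℝ × ℝ => 1 + q.1 ^ 2 + q.2 ^ 2) p := by fun_prop
lemma diff_den2 : DifferentiableAt ℝ (fun q : ℝ × ℝ => (1 + q.1 ^ 2 + q.2 ^ 2) ^ 2) p := by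
  fun_prop

lemma diff_phi0 : DifferentiableAt ℝ phi0 p :=
  diffAt_div diff_num diff_den den_ne

lemma diff_phi0x : DifferentiableAt ℝ phi0x p :=
  diffAt_div (by fun_prop) diff_den2 (pow_ne_zero 2 den_ne)

lemma diff_phi0y : DifferentiableAt ℝ phi0y p :=
  diffAt_div (by fun_prop) diff_den2 (pow_ne_zero 2 den_ne)

lemma pdx_num : pdx (fun q : ℝ × ℝ => -(1 - q.1 ^ 2 - q.2 ^ 2)) p = 2 * p.1 := by
  rw [pdx_neg, pdx_sub (by fun_prop) (by fun_prop), pdx_sub (by fun_prop) (by fun_prop),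
    pdx_const, pdx_pow differentiableAt_fst 2, pdx_pow differentiableAt_snd 2, pdx_fst, pdx_snd]
  ring

lemma pdy_num : pdy (fun q : ℝ × ℝ => -(1 - q.1 ^ 2 - q.2 ^ 2)) p = 2 * p.2 := by
  rw [pdy_neg, pdy_sub (by fun_prop) (by fun_prop), pdy_sub (by fun_prop) (by fun_prop),
    pdy_const, pdy_pow differentiableAt_fst 2, pdy_pow differentiableAt_snd 2, pdy_fst, pdy_snd]
  ring

lemma pdx_den : pdx (fun q : ℝ × ℝ => 1 + q.1 ^ 2 + q.2 ^ 2) p = 2 * p.1 := by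
  rw [show (fun q : ℝ × ℝ => 1 + q.1 ^ 2 + q.2 ^ 2)
      = fun q : ℝ × ℝ => -(1 - q.1 ^ 2 - q.2 ^ 2) - (-2) from by ext q; ring,
    pdx_sub diff_num (by fun_prop), pdx_const, pdx_num]
  ring

lemma pdy_den : pdy (fun q : ℝ × ℝ => 1 + q.1 ^ 2 + q.2 ^ 2) p = 2 * p.2 := by
  rw [show (fun q : ℝ × ℝ => 1 + q.1 ^ 2 + q.2 ^ 2)
      = fun q : ℝ × ℝ => -(1 - q.1 ^ 2 - q.2 ^ 2) - (-2) from by ext q; ring,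
    pdy_sub diff_num (by fun_prop), pdy_const, pdy_num]
  ring

lemma pdx_phi0 : pdx phi0 p = phi0x p := by
  rw [show phi0 = fun q : ℝ × ℝ =>
      (-(1 - q.1 ^ 2 - q.2 ^ 2)) / (1 + q.1 ^ 2 + q.2 ^ 2) from rfl,
    pdx_div diff_num diff_den den_ne, pdx_num, pdx_den]
  have h := @den_ne p
  unfold phi0x
  field_simp
  ring

lemma pdy_phi0 : pdy phi0 p = phi0y p := by
  rw [show phi0 = fun q : ℝ × ℝ =>
      (-(1 - q.1 ^ 2 - q.2 ^ 2)) / (1 + q.1 ^ 2 + q.2 ^ 2) from rfl,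
    pdy_div diff_num diff_den den_ne, pdy_num, pdy_den]
  have h := @den_ne p
  unfold phi0y
  field_simp
  ring

lemma pdx_den2 : pdx (fun q : ℝ × ℝ => (1 + q.1 ^ 2 + q.2 ^ 2) ^ 2) p
    = 2 * (1 + p.1 ^ 2 + p.2 ^ 2) * (2 * p.1) := by
  rw [pdx_sq diff_den, pdx_den]

lemma pdy_den2 : pdy (fun q : ℝ × ℝ => (1 + q.1 ^ 2 + q.2 ^ 2) ^ 2) p
    = 2 * (1 + p.1 ^ 2 + p.2 ^ 2) * (2 * p.2) := by
  rw [pdy_sq diff_den, pdy_den]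

lemma pdx_phi0x : pdx phi0x p
    = (4 * (1 + p.1 ^ 2 + p.2 ^ 2) - 16 * p.1 ^ 2) / (1 + p.1 ^ 2 + p.2 ^ 2) ^ 3 := by
  have h4 : pdx (fun q : ℝ × ℝ => 4 * q.1) p = 4 := by
    rw [show (fun q : ℝ × ℝ => 4 * q.1) = fun q : ℝ × ℝ => (fun _ : ℝ × ℝ => (4:ℝ)) q * q.1
      from rfl, pdx_mul (by fun_prop) differentiableAt_fst, pdx_const, pdx_fst]; ring
  rw [show phi0x = fun q : ℝ × ℝ => (4 * q.1) / ((1 + q.1 ^ 2 + q.2 ^ 2) ^ 2) from rfl,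
    pdx_div (by fun_prop) diff_den2 (pow_ne_zero 2 den_ne), h4, pdx_den2]
  have h := @den_ne p
  field_simp
  ring

lemma pdy_phi0y : pdy phi0y p
    = (4 * (1 + p.1 ^ 2 + p.2 ^ 2) - 16 * p.2 ^ 2) / (1 + p.1 ^ 2 + p.2 ^ 2) ^ 3 := by
  have h4 : pdy (fun q : ℝ × ℝ => 4 * q.2) p = 4 := by
    rw [show (fun q : ℝ × ℝ => 4 * q.2) = fun q : ℝ × ℝ => (fun _ : ℝ × ℝ => (4:ℝ)) q * q.2
      from rfl, pdy_mul (by fun_prop) differentiableAt_snd, pdy_const, pdy_snd]; ring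
  rw [show phi0y = fun q : ℝ × ℝ => (4 * q.2) / ((1 + q.1 ^ 2 + q.2 ^ 2) ^ 2) from rfl,
    pdy_div (by fun_prop) diff_den2 (pow_ne_zero 2 den_ne), h4, pdy_den2]
  have h := @den_ne p
  field_simp
  ring

lemma phi0_ne (hp : p.1 ^ 2 + p.2 ^ 2 < 1) : phi0 p ≠ 0 := by
  unfold phi0
  apply div_ne_zero _ den_ne
  have : (0:ℝ) < 1 - p.1 ^ 2 - p.2 ^ 2 := by nlinarith
  intro h; nlinarith [neg_eq_zero.mp h]

end helpers

/-- Abstract algebraic identity behind the transformation. -/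
lemma alg (P0 Px Py Pxx Pyy a ax ay axx ayy s2 : ℝ) (h0 : P0 ≠ 0) (hs2 : s2 ≠ 0)
    (hsum : Pxx + Pyy = -8 * P0 / s2) :
    axx + ayy + 8 * a / s2 = P0 *
      (((axx * P0 + ax * Px - (ax * Px + a * Pxx)) * P0 ^ 2 -
          (ax * P0 - a * Px) * (2 * P0 * Px)) / (P0 ^ 2) ^ 2 +
        ((ayy * P0 + ay * Py - (ay * Py + a * Pyy)) * P0 ^ 2 -
          (ay * P0 - a * Py) * (2 * P0 * Py)) / (P0 ^ 2) ^ 2 +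
        2 / P0 * (Px * ((ax * P0 - a * Px) / P0 ^ 2) + Py * ((ay * P0 - a * Py) / P0 ^ 2))) := by
  have h : Pxx = -8 * P0 / s2 - Pyy := by linarith
  subst h
  field_simp
  ring

set_option maxHeartbeats 1000000 in
/-- Key pointwise identity: `Δφ + 8φ/s² = φ₀ · (Δψ + (2/φ₀)∇φ₀·∇ψ)` on `V`. -/
lemma key (V : Set (ℝ × ℝ)) (hVo : IsOpen V)
    (hVD : V ⊆ {p : ℝ × ℝ | p.1 ^ 2 + p.2 ^ 2 < 1})
    (φ : ℝ × ℝ → ℝ)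
    (hd : ∀ p ∈ V, DifferentiableAt ℝ φ p ∧
      DifferentiableAt ℝ (pdx φ) p ∧ DifferentiableAt ℝ (pdy φ) p)
    (p : ℝ × ℝ) (hp : p ∈ V) :
    lap φ p + 8 * φ p / (1 + p.1 ^ 2 + p.2 ^ 2) ^ 2 =
      phi0 p * (lap (fun q => φ q / phi0 q) p +
        (2 / phi0 p) * (pdx phi0 p * pdx (fun q => φ q / phi0 q) p +
          pdy phi0 p * pdy (fun q => φ q / phi0 q) p)) := by
  have h0 : ∀ q ∈ V, phi0 q ≠ 0 := fun q hq => phi0_ne (hVD hq)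
  have hFx : ∀ q ∈ V, pdx (fun q => φ q / phi0 q) q
      = (pdx φ q * phi0 q - φ q * phi0x q) / phi0 q ^ 2 := by
    intro q hq
    rw [pdx_div (hd q hq).1 diff_phi0 (h0 q hq), pdx_phi0]
  have hFy : ∀ q ∈ V, pdy (fun q => φ q / phi0 q) q
      = (pdy φ q * phi0 q - φ q * phi0y q) / phi0 q ^ 2 := by
    intro q hq
    rw [pdy_div (hd q hq).1 diff_phi0 (h0 q hq), pdy_phi0]
  have hEx : pdx (fun q => φ q / phi0 q)
      =ᶠ[𝓝 p] fun q => (pdx φ q * phi0 q - φ q * phi0x q) / phi0 q ^ 2 :=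
    Filter.eventuallyEq_of_mem (hVo.mem_nhds hp) hFx
  have hEy : pdy (fun q => φ q / phi0 q)
      =ᶠ[𝓝 p] fun q => (pdy φ q * phi0 q - φ q * phi0y q) / phi0 q ^ 2 :=
    Filter.eventuallyEq_of_mem (hVo.mem_nhds hp) hFy
  have hxx : pdx (pdx (fun q => φ q / phi0 q)) p
      = pdx (fun q => (pdx φ q * phi0 q - φ q * phi0x q) / phi0 q ^ 2) p := by
    show (fderiv ℝ (pdx fun q => φ q / phi0 q) p) (1, 0) = _
    rw [hEx.fderiv_eq]; rfl
  have hyy : pdy (pdy (fun q => φ q / phi0 q)) p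
      = pdy (fun q => (pdy φ q * phi0 q - φ q * phi0y q) / phi0 q ^ 2) p := by
    show (fderiv ℝ (pdy fun q => φ q / phi0 q) p) (0, 1) = _
    rw [hEy.fderiv_eq]; rfl
  have hdnx : DifferentiableAt ℝ (fun q => pdx φ q * phi0 q - φ q * phi0x q) p :=
    ((hd p hp).2.1.mul diff_phi0).sub ((hd p hp).1.mul diff_phi0x)
  have hdny : DifferentiableAt ℝ (fun q => pdy φ q * phi0 q - φ q * phi0y q) p :=
    ((hd p hp).2.2.mul diff_phi0).sub ((hd p hp).1.mul diff_phi0y)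
  have hdd : DifferentiableAt ℝ (fun q => phi0 q ^ 2) p := diff_phi0.pow 2
  have hd2 : (phi0 p ^ 2 : ℝ) ≠ 0 := pow_ne_zero 2 (h0 p hp)
  rw [pdx_div hdnx hdd hd2,
    pdx_sub (f := fun q => pdx φ q * phi0 q) (g := fun q => φ q * phi0x q) ((hd p hp).2.1.mul diff_phi0) ((hd p hp).1.mul diff_phi0x),
    pdx_mul (hd p hp).2.1 diff_phi0, pdx_mul (hd p hp).1 diff_phi0x,
    pdx_sq diff_phi0, pdx_phi0] at hxx
  rw [pdy_div hdny hdd hd2,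
    pdy_sub (f := fun q => pdy φ q * phi0 q) (g := fun q => φ q * phi0y q) ((hd p hp).2.2.mul diff_phi0) ((hd p hp).1.mul diff_phi0y),
    pdy_mul (hd p hp).2.2 diff_phi0, pdy_mul (hd p hp).1 diff_phi0y,
    pdy_sq diff_phi0, pdy_phi0] at hyy
  have hs2 : ((1 + p.1 ^ 2 + p.2 ^ 2) ^ 2 : ℝ) ≠ 0 := pow_ne_zero 2 den_ne
  have hsum : pdx phi0x p + pdy phi0y p = -8 * phi0 p / (1 + p.1 ^ 2 + p.2 ^ 2) ^ 2 := by
    rw [pdx_phi0x, pdy_phi0y]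
    simp only [phi0]
    field_simp
    ring
  unfold lap
  rw [hxx, hyy, hFx p hp, hFy p hp, pdx_phi0, pdy_phi0]
  linear_combination alg (phi0 p) (phi0x p) (phi0y p) (pdx phi0x p) (pdy phi0y p)
    (φ p) (pdx φ p) (pdy φ p) (pdx (pdx φ) p) (pdy (pdy φ) p)
    ((1 + p.1 ^ 2 + p.2 ^ 2) ^ 2) (h0 p hp) hs2 hsum

/-- On an open subset `V` of the unit disk, a twice differentiable `φ` satisfies
`Δφ + 8φ/(1 + x² + y²)² = 0` iff `ψ = φ/φ₀` satisfies
`Δψ + (2/φ₀)(φ₀ₓ ψ_x + φ₀_y ψ_y) = 0`. -/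
theorem pde_transform_by_phi0
    (V : Set (ℝ × ℝ)) (hVo : IsOpen V)
    (hVD : V ⊆ {p : ℝ × ℝ | p.1 ^ 2 + p.2 ^ 2 < 1})
    (φ : ℝ × ℝ → ℝ)
    (hd : ∀ p ∈ V, DifferentiableAt ℝ φ p ∧
      DifferentiableAt ℝ (pdx φ) p ∧ DifferentiableAt ℝ (pdy φ) p) :
    letI ψ : ℝ × ℝ → ℝ := fun q => φ q / phi0 q
    (∀ p ∈ V, lap φ p + 8 * φ p / (1 + p.1 ^ 2 + p.2 ^ 2) ^ 2 = 0) ↔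
      (∀ p ∈ V, lap ψ p +
        (2 / phi0 p) * (pdx phi0 p * pdx ψ p + pdy phi0 p * pdy ψ p) = 0) := by
  show (∀ p ∈ V, lap φ p + 8 * φ p / (1 + p.1 ^ 2 + p.2 ^ 2) ^ 2 = 0) ↔
      (∀ p ∈ V, lap (fun q => φ q / phi0 q) p +
        (2 / phi0 p) * (pdx phi0 p * pdx (fun q => φ q / phi0 q) p +
          pdy phi0 p * pdy (fun q => φ q / phi0 q) p) = 0)
  constructor
  · intro h p hp
    have hk := key V hVo hVD φ hd p hp
    rw [h p hp] at hk
    exact ((mul_eq_zero.mp hk.symm).resolve_left (phi0_ne (hVD hp)))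
  · intro h p hp
    have hk := key V hVo hVD φ hd p hp
    rw [h p hp, mul_zero] at hk
    exact hk
end

section
/- For every natural number n and every complex number c, the function u defined on 𝔻 by u(x,y) ≔ Re( c · ((1 + x² + y²)/(1 − x² − y²) + n) · (x + iy)ⁿ ) satisfies Δu − 8·u/(1 − x² − y²)² = 0 at every point of 𝔻. -/
noncomputable def dm (a b : ℂ) : ℝ × ℝ →L[ℝ] ℂ :=
  (ContinuousLinearMap.fst ℝ ℝ ℝ).smulRight a + (ContinuousLinearMap.snd ℝ ℝ ℝ).smulRight b

@[simp] lemma dm_apply (a b : ℂ) (h : ℝ × ℝ) : dm a b h = h.1 • a + h.2 • b := rfl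

noncomputable def dmr (a b : ℝ) : ℝ × ℝ →L[ℝ] ℝ :=
  (ContinuousLinearMap.fst ℝ ℝ ℝ).smulRight a + (ContinuousLinearMap.snd ℝ ℝ ℝ).smulRight b

@[simp] lemma dmr_apply (a b : ℝ) (h : ℝ × ℝ) : dmr a b h = h.1 • a + h.2 • b := rfl

noncomputable def wf (q : ℝ × ℝ) : ℂ := q.1 + q.2 * Complex.I

lemma hasWf (p : ℝ × ℝ) : HasFDerivAt wf (dm 1 Complex.I) p := by
  have h1 : HasFDerivAt (fun q : ℝ × ℝ => (q.1 : ℂ))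
      (Complex.ofRealCLM.comp (ContinuousLinearMap.fst ℝ ℝ ℝ)) p :=
    Complex.ofRealCLM.hasFDerivAt.comp p hasFDerivAt_fst
  have h2 : HasFDerivAt (fun q : ℝ × ℝ => (q.2 : ℂ))
      (Complex.ofRealCLM.comp (ContinuousLinearMap.snd ℝ ℝ ℝ)) p :=
    Complex.ofRealCLM.hasFDerivAt.comp p hasFDerivAt_snd
  have h3 := h1.add (h2.mul_const Complex.I)
  refine h3.congr_fderiv ?_
  apply ContinuousLinearMap.ext
  rintro ⟨a, b⟩
  simp [Complex.real_smul]
  ring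

lemma hasWfPow (m : ℕ) (p : ℝ × ℝ) :
    HasFDerivAt (fun q => wf q ^ m)
      (dm ((m : ℂ) * wf p ^ (m - 1)) ((m : ℂ) * wf p ^ (m - 1) * Complex.I)) p := by
  have h := ((hasDerivAt_pow m (wf p)).hasFDerivAt.restrictScalars ℝ).comp p (hasWf p)
  refine h.congr_fderiv ?_
  apply ContinuousLinearMap.ext
  rintro ⟨a, b⟩
  simp [Complex.real_smul, smul_eq_mul]
  ring

lemma master {q : ℝ × ℝ} (c' : ℂ) (m : ℕ) {φ : ℝ × ℝ → ℝ} {a b : ℝ}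
    (hφ : HasFDerivAt φ (dmr a b) q) :
    HasFDerivAt (fun x => (c' * ((φ x : ℝ) : ℂ) * wf x ^ m).re)
      (dmr (c' * ((a : ℂ) * wf q ^ m + (φ q : ℂ) * m * wf q ^ (m - 1))).re
           (c' * ((b : ℂ) * wf q ^ m + (φ q : ℂ) * m * wf q ^ (m - 1) * Complex.I)).re) q := by
  have hφC : HasFDerivAt (fun x => ((φ x : ℝ) : ℂ)) (Complex.ofRealCLM.comp (dmr a b)) q :=
    Complex.ofRealCLM.hasFDerivAt.comp q hφ
  have h1 := (hφC.mul (hasWfPow m q)).const_mul c'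
  have h2 := Complex.reCLM.hasFDerivAt.comp q h1
  have hfe : (fun x => (c' * ((φ x : ℝ) : ℂ) * wf x ^ m).re)
      = (⇑Complex.reCLM ∘ fun y => c' * (((φ y : ℝ) : ℂ) * wf y ^ m)) := by
    funext x; simp [mul_assoc]
  rw [hfe]
  refine h2.congr_fderiv ?_
  apply ContinuousLinearMap.ext
  rintro ⟨x1, x2⟩
  simp [Complex.real_smul, smul_eq_mul, Complex.add_re, Complex.mul_re, Complex.mul_im,
    Complex.add_im, Complex.ofReal_re, Complex.ofReal_im, Complex.I_re, Complex.I_im]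
  ring

noncomputable def phiA (n : ℕ) (q : ℝ × ℝ) : ℝ :=
  (1 + q.1 ^ 2 + q.2 ^ 2) / (1 - q.1 ^ 2 - q.2 ^ 2) + (n : ℝ)
noncomputable def phi1 (q : ℝ × ℝ) : ℝ := 4 * q.1 / (1 - q.1 ^ 2 - q.2 ^ 2) ^ 2
noncomputable def phi3 (q : ℝ × ℝ) : ℝ := 4 * q.2 / (1 - q.1 ^ 2 - q.2 ^ 2) ^ 2
noncomputable def phi1x (q : ℝ × ℝ) : ℝ :=
  4 / (1 - q.1 ^ 2 - q.2 ^ 2) ^ 2 + 16 * q.1 ^ 2 / (1 - q.1 ^ 2 - q.2 ^ 2) ^ 3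
noncomputable def phi1y (q : ℝ × ℝ) : ℝ := 16 * q.1 * q.2 / (1 - q.1 ^ 2 - q.2 ^ 2) ^ 3
noncomputable def phi3y (q : ℝ × ℝ) : ℝ :=
  4 / (1 - q.1 ^ 2 - q.2 ^ 2) ^ 2 + 16 * q.2 ^ 2 / (1 - q.1 ^ 2 - q.2 ^ 2) ^ 3

lemma hasS (q : ℝ × ℝ) :
    HasFDerivAt (fun q : ℝ × ℝ => q.1 ^ 2 + q.2 ^ 2) (dmr (2 * q.1) (2 * q.2)) q := by
  have h1 : HasFDerivAt (fun q : ℝ × ℝ => q.1) (ContinuousLinearMap.fst ℝ ℝ ℝ) q := hasFDerivAt_fst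
  have h2 : HasFDerivAt (fun q : ℝ × ℝ => q.2) (ContinuousLinearMap.snd ℝ ℝ ℝ) q := hasFDerivAt_snd
  have h := (h1.mul h1).add (h2.mul h2)
  refine HasFDerivAt.congr_of_eventuallyEq (h.congr_fderiv ?_) (Filter.Eventually.of_forall fun x => ?_)
  · apply ContinuousLinearMap.ext; rintro ⟨a, b⟩; simp; ring
  · simp only [Pi.add_apply, Pi.mul_apply]; ring

lemma hasComp {q : ℝ × ℝ} {ψ : ℝ → ℝ} {d : ℝ} (hψ : HasDerivAt ψ d (q.1 ^ 2 + q.2 ^ 2)) :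
    HasFDerivAt (fun q : ℝ × ℝ => ψ (q.1 ^ 2 + q.2 ^ 2)) (dmr (2 * q.1 * d) (2 * q.2 * d)) q := by
  have h := hψ.comp_hasFDerivAt q (hasS q)
  refine h.congr_fderiv ?_
  apply ContinuousLinearMap.ext; rintro ⟨a, b⟩; simp; ring

lemma hasPhiA (n : ℕ) (q : ℝ × ℝ) (hd : 1 - q.1 ^ 2 - q.2 ^ 2 ≠ 0) :
    HasFDerivAt (phiA n) (dmr (phi1 q) (phi3 q)) q := by
  have hd' : 1 - (q.1 ^ 2 + q.2 ^ 2) ≠ 0 := by rw [← sub_sub]; exact hd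
  have hnum : HasDerivAt (fun t : ℝ => 1 + t) 1 (q.1 ^ 2 + q.2 ^ 2) := by
    simpa using (hasDerivAt_id (q.1 ^ 2 + q.2 ^ 2)).const_add 1
  have hden : HasDerivAt (fun t : ℝ => 1 - t) (-1) (q.1 ^ 2 + q.2 ^ 2) := by
    simpa using (hasDerivAt_id (q.1 ^ 2 + q.2 ^ 2)).const_sub 1
  have hψ : HasDerivAt (fun t : ℝ => (1 + t) / (1 - t) + (n : ℝ))
      (2 / (1 - (q.1 ^ 2 + q.2 ^ 2)) ^ 2) (q.1 ^ 2 + q.2 ^ 2) := by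
    have := (hnum.div hden hd').add_const (n : ℝ)
    refine this.congr_deriv ?_
    field_simp
    ring
  have h := hasComp hψ
  have hfe : (fun q : ℝ × ℝ => (1 + (q.1 ^ 2 + q.2 ^ 2)) / (1 - (q.1 ^ 2 + q.2 ^ 2)) + (n : ℝ))
      = phiA n := by
    funext x; simp only [phiA, sub_sub, add_assoc]
  rw [hfe] at h
  refine h.congr_fderiv ?_
  congr 1 <;> · simp only [phi1, phi3]; field_simp; ring

lemma hasG (q : ℝ × ℝ) (hd : 1 - q.1 ^ 2 - q.2 ^ 2 ≠ 0) :
    HasDerivAt (fun t : ℝ => 4 / (1 - t) ^ 2) (8 / (1 - (q.1 ^ 2 + q.2 ^ 2)) ^ 3)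
      (q.1 ^ 2 + q.2 ^ 2) := by
  have hd' : 1 - (q.1 ^ 2 + q.2 ^ 2) ≠ 0 := by rw [← sub_sub]; exact hd
  have hden : HasDerivAt (fun t : ℝ => 1 - t) (-1) (q.1 ^ 2 + q.2 ^ 2) := by
    simpa using (hasDerivAt_id (q.1 ^ 2 + q.2 ^ 2)).const_sub 1
  have hp := hden.pow 2
  have := (hasDerivAt_const (q.1 ^ 2 + q.2 ^ 2) (4 : ℝ)).div hp (pow_ne_zero 2 hd')
  refine this.congr_deriv ?_
  simp only [Pi.pow_apply]
  field_simp
  ring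

lemma hasPhi1 (q : ℝ × ℝ) (hd : 1 - q.1 ^ 2 - q.2 ^ 2 ≠ 0) :
    HasFDerivAt phi1 (dmr (phi1x q) (phi1y q)) q := by
  have h1 : HasFDerivAt (fun q : ℝ × ℝ => q.1) (ContinuousLinearMap.fst ℝ ℝ ℝ) q := hasFDerivAt_fst
  have hG := hasComp (hasG q hd)
  have h := h1.mul hG
  have hfe : ((fun x : ℝ × ℝ => x.1) * fun x : ℝ × ℝ => 4 / (1 - (x.1 ^ 2 + x.2 ^ 2)) ^ 2) = phi1 := by
    funext x; rw [Pi.mul_apply, phi1, ← sub_sub]; ring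
  rw [hfe] at h
  refine h.congr_fderiv ?_
  apply ContinuousLinearMap.ext; rintro ⟨a, b⟩
  have hd' : 1 - (q.1 ^ 2 + q.2 ^ 2) ≠ 0 := by rw [← sub_sub]; exact hd
  simp [phi1x, phi1y, ← sub_sub]
  field_simp
  ring

lemma hasPhi3 (q : ℝ × ℝ) (hd : 1 - q.1 ^ 2 - q.2 ^ 2 ≠ 0) :
    HasFDerivAt phi3 (dmr (phi1y q) (phi3y q)) q := by
  have h1 : HasFDerivAt (fun q : ℝ × ℝ => q.2) (ContinuousLinearMap.snd ℝ ℝ ℝ) q := hasFDerivAt_snd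
  have hG := hasComp (hasG q hd)
  have h := h1.mul hG
  have hfe : ((fun x : ℝ × ℝ => x.2) * fun x : ℝ × ℝ => 4 / (1 - (x.1 ^ 2 + x.2 ^ 2)) ^ 2) = phi3 := by
    funext x; rw [Pi.mul_apply, phi3, ← sub_sub]; ring
  rw [hfe] at h
  refine h.congr_fderiv ?_
  apply ContinuousLinearMap.ext; rintro ⟨a, b⟩
  have hd' : 1 - (q.1 ^ 2 + q.2 ^ 2) ≠ 0 := by rw [← sub_sub]; exact hd
  simp [phi1y, phi3y, ← sub_sub]
  field_simp
  ring

lemma pdx_of {f : ℝ × ℝ → ℝ} {L : ℝ × ℝ →L[ℝ] ℝ} {q : ℝ × ℝ} (h : HasFDerivAt f L q) :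
    pdx f q = L (1, 0) := by rw [pdx, h.fderiv]

lemma pdy_of {f : ℝ × ℝ → ℝ} {L : ℝ × ℝ →L[ℝ] ℝ} {q : ℝ × ℝ} (h : HasFDerivAt f L q) :
    pdy f q = L (0, 1) := by rw [pdy, h.fderiv]

lemma pdx_congr {f g : ℝ × ℝ → ℝ} {p : ℝ × ℝ} (h : f =ᶠ[nhds p] g) :
    pdx f p = pdx g p := by unfold pdx; rw [h.fderiv_eq]

lemma pdy_congr {f g : ℝ × ℝ → ℝ} {p : ℝ × ℝ} (h : f =ᶠ[nhds p] g) :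
    pdy f p = pdy g p := by unfold pdy; rw [h.fderiv_eq]

noncomputable def Ufun (n : ℕ) (c : ℂ) : ℝ × ℝ → ℝ :=
  fun x => (c * ((phiA n x : ℝ) : ℂ) * wf x ^ n).re

noncomputable def uxf (n : ℕ) (c : ℂ) : ℝ × ℝ → ℝ := fun q =>
  (c * ((phi1 q : ℝ) : ℂ) * wf q ^ n).re
  + ((c * n) * ((phiA n q : ℝ) : ℂ) * wf q ^ (n - 1)).re

noncomputable def uyf (n : ℕ) (c : ℂ) : ℝ × ℝ → ℝ := fun q =>
  (c * ((phi3 q : ℝ) : ℂ) * wf q ^ n).re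
  + ((c * n * Complex.I) * ((phiA n q : ℝ) : ℂ) * wf q ^ (n - 1)).re

lemma dne {q : ℝ × ℝ} (hq : q.1 ^ 2 + q.2 ^ 2 < 1) : 1 - q.1 ^ 2 - q.2 ^ 2 ≠ 0 := by
  have : 0 < 1 - q.1 ^ 2 - q.2 ^ 2 := by linarith
  linarith

lemma pdxU (n : ℕ) (c : ℂ) (q : ℝ × ℝ) (hq : q.1 ^ 2 + q.2 ^ 2 < 1) :
    pdx (Ufun n c) q = uxf n c q := by
  have h := master c n (hasPhiA n q (dne hq))
  refine (pdx_of (f := Ufun n c) h).trans ?_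
  simp only [dmr_apply, one_smul, zero_smul, add_zero, uxf]
  rw [← Complex.add_re]
  congr 1
  ring

lemma pdyU (n : ℕ) (c : ℂ) (q : ℝ × ℝ) (hq : q.1 ^ 2 + q.2 ^ 2 < 1) :
    pdy (Ufun n c) q = uyf n c q := by
  have h := master c n (hasPhiA n q (dne hq))
  refine (pdy_of (f := Ufun n c) h).trans ?_
  simp only [dmr_apply, one_smul, zero_smul, zero_add, uyf]
  rw [← Complex.add_re]
  congr 1
  ring

lemma disk_open : IsOpen {q : ℝ × ℝ | q.1 ^ 2 + q.2 ^ 2 < 1} := by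
  apply isOpen_lt
  · fun_prop
  · fun_prop

/-- For each `n ∈ ℕ`, `c ∈ ℂ`, the function
`u(x,y) = Re(c ((1+x²+y²)/(1−x²−y²) + n) (x+iy)ⁿ)` solves
`Δu − 8u/(1 − x² − y²)² = 0` on the unit disk. -/
theorem mode_solutions_kappa_neg_one (n : ℕ) (c : ℂ) :
    letI u : ℝ × ℝ → ℝ := fun p =>
      (c * ((((1 + p.1 ^ 2 + p.2 ^ 2) / (1 - p.1 ^ 2 - p.2 ^ 2) + (n : ℝ)) : ℝ) : ℂ)
        * ((p.1 : ℂ) + (p.2 : ℂ) * Complex.I) ^ n).re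
    ∀ p : ℝ × ℝ, p.1 ^ 2 + p.2 ^ 2 < 1 →
      lap u p - 8 * u p / (1 - p.1 ^ 2 - p.2 ^ 2) ^ 2 = 0 := by
  intro p hp
  show lap (Ufun n c) p - 8 * Ufun n c p / (1 - p.1 ^ 2 - p.2 ^ 2) ^ 2 = 0
  have hd : 1 - p.1 ^ 2 - p.2 ^ 2 ≠ 0 := dne hp
  have hmem : {q : ℝ × ℝ | q.1 ^ 2 + q.2 ^ 2 < 1} ∈ nhds p := disk_open.mem_nhds hp
  have hevx : pdx (Ufun n c) =ᶠ[nhds p] uxf n c :=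
    Filter.eventually_of_mem hmem fun q hq => pdxU n c q hq
  have hevy : pdy (Ufun n c) =ᶠ[nhds p] uyf n c :=
    Filter.eventually_of_mem hmem fun q hq => pdyU n c q hq
  have hux : HasFDerivAt (uxf n c) _ p :=
    (master c n (hasPhi1 p hd)).add (master (c * n) (n - 1) (hasPhiA n p hd))
  have huy : HasFDerivAt (uyf n c) _ p :=
    (master c n (hasPhi3 p hd)).add (master (c * n * Complex.I) (n - 1) (hasPhiA n p hd))
  have hxx : pdx (pdx (Ufun n c)) p
      = (c * ((phi1x p : ℂ) * wf p ^ n + (phi1 p : ℂ) * n * wf p ^ (n - 1))).re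
        + ((c * n) * ((phi1 p : ℂ) * wf p ^ (n - 1)
            + (phiA n p : ℂ) * (↑(n - 1) : ℂ) * wf p ^ (n - 1 - 1))).re := by
    rw [pdx_congr hevx, pdx_of hux]
    simp
  have hyy : pdy (pdy (Ufun n c)) p
      = (c * ((phi3y p : ℂ) * wf p ^ n + (phi3 p : ℂ) * n * wf p ^ (n - 1) * Complex.I)).re
        + ((c * n * Complex.I) * ((phi3 p : ℂ) * wf p ^ (n - 1)
            + (phiA n p : ℂ) * (↑(n - 1) : ℂ) * wf p ^ (n - 1 - 1) * Complex.I)).re := by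
    rw [pdy_congr hevy, pdy_of huy]
    simp
  have hu8 : 8 * Ufun n c p / (1 - p.1 ^ 2 - p.2 ^ 2) ^ 2
      = (((8 / (1 - p.1 ^ 2 - p.2 ^ 2) ^ 2 : ℝ) : ℂ)
          * (c * ((phiA n p : ℝ) : ℂ) * wf p ^ n)).re := by
    rw [Complex.re_ofReal_mul, Ufun]
    ring
  rw [lap, hxx, hyy, hu8, ← Complex.add_re, ← Complex.add_re, ← Complex.add_re,
    ← Complex.sub_re]
  set r : ℝ := 8 / (1 - p.1 ^ 2 - p.2 ^ 2) ^ 2 with hr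
  have hr1 : phi1x p + phi3y p = phiA n p * r - (n : ℝ) * r := by
    rw [phi1x, phi3y, phiA, hr]
    field_simp
    ring
  have hr2 : 2 * phi1 p = p.1 * r := by
    rw [phi1, hr]; field_simp; ring
  have hr3 : 2 * phi3 p = p.2 * r := by
    rw [phi3, hr]; field_simp; ring
  have hc1 : ((phi1x p : ℝ) : ℂ) + ((phi3y p : ℝ) : ℂ)
      = ((phiA n p : ℝ) : ℂ) * (r : ℂ) - (n : ℂ) * (r : ℂ) := by exact_mod_cast hr1
  have hc2 : 2 * ((phi1 p : ℝ) : ℂ) = (p.1 : ℂ) * (r : ℂ) := by exact_mod_cast hr2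
  have hc3 : 2 * ((phi3 p : ℝ) : ℂ) = (p.2 : ℂ) * (r : ℂ) := by exact_mod_cast hr3
  rw [show (0 : ℝ) = (0 : ℂ).re from rfl]
  congr 1
  rcases n with _ | m
  · simp only [Nat.cast_zero, pow_zero, wf]
    linear_combination c * hc1
  · push_cast at hc1 ⊢
    simp only [Nat.add_sub_cancel, wf]
    linear_combination (c * ((p.1 : ℂ) + (p.2 : ℂ) * Complex.I) ^ (m + 1)) * hc1
      + (((m : ℂ) + 1) * c * ((p.1 : ℂ) + (p.2 : ℂ) * Complex.I) ^ m) * hc2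
      + (((m : ℂ) + 1) * c * ((p.1 : ℂ) + (p.2 : ℂ) * Complex.I) ^ m * Complex.I) * hc3
      + (((m : ℂ) + 1) * (m : ℂ) * c * ((phiA (m + 1) p : ℝ) : ℂ)
          * ((p.1 : ℂ) + (p.2 : ℂ) * Complex.I) ^ (m - 1)) * Complex.I_mul_I
end
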